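/- Let w̃(ν) = (T/2)·e^{-iπTν}·sinc(Tν)/(1-(Tν)²) be the Fourier transform of the Hann window, and for k ≥ 2 let ν_k^w be the location of the maximum of |w̃| on the interval (k/T, (k+1)/T). Then ν_k^w < (k + 1/2)/T and |w̃(ν_k^w)| < T/(2π k³). -/

import Mathlib

open Real

noncomputable def hannFTFormula (T : ℝ) (ν : ℝ) : ℂ :=
  (T / 2 : ℂ) * Complex.exp (-Real.pi * T * ν * Complex.I) *
    ((Real.sin (Real.pi * (T * ν)) / (Real.pi * (T * ν)) : ℝ) : ℂ) / (1 - ((T * ν : ℝ) : ℂ) ^ 2)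

private lemma cube_pos {z : ℝ} (h : 1 < z) : 0 < z^3 - z := by
  have h0 : 0 < z := by linarith
  have h1 : 0 < z * (z - 1) * (z + 1) := mul_pos (mul_pos h0 (by linarith)) (by linarith)
  nlinarith [h1]

private lemma abs_sin_pi_shift (k : ℕ) (x : ℝ) :
    |Real.sin (π * x)| = |Real.sin (π * (x - k))| := by
  have h : π * x = π * (x - k) + k * π := by ring
  rw [h, Real.sin_add_nat_mul_pi, abs_mul, abs_pow, abs_neg, abs_one, one_pow, one_mul]

private lemma abs_hann (T ν : ℝ) (hT : 0 < T) (hx : 1 < T * ν) :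
    ‖hannFTFormula T ν‖
      = T * |Real.sin (π * (T * ν))| / (2 * π * ((T * ν) ^ 3 - T * ν)) := by
  have hx0 : 0 < T * ν := by linarith
  have hπ := Real.pi_pos
  unfold hannFTFormula
  rw [norm_div, norm_mul, norm_mul]
  rw [show (-(Real.pi:ℂ) * T * ν * Complex.I) = ((-(Real.pi * T * ν) : ℝ):ℂ) * Complex.I by
    push_cast; ring]
  rw [Complex.norm_exp_ofReal_mul_I]
  rw [show ((1:ℂ) - ((T * ν : ℝ):ℂ) ^ 2) = (((1 - (T*ν)^2 : ℝ)):ℂ) by push_cast; ring]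
  rw [show ((T:ℂ) / 2) = (((T/2 : ℝ)):ℂ) by push_cast; ring]
  simp only [Complex.norm_real, Real.norm_eq_abs]
  rw [abs_of_pos (by linarith : (0:ℝ) < T/2), abs_div,
    abs_of_pos (show (0:ℝ) < π * (T*ν) by positivity)]
  rw [show |1 - (T*ν)^2| = (T*ν)^2 - 1 by
    rw [abs_sub_comm, abs_of_pos]; nlinarith]
  have h1 : π * (T*ν) ≠ 0 := by positivity
  have h2 : (T*ν)^2 - 1 ≠ 0 := ne_of_gt (by nlinarith)
  have h3 : (T*ν)^3 - T*ν ≠ 0 := ne_of_gt (cube_pos hx)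
  field_simp

private lemma core (k : ℕ) (hk : 2 ≤ k) (x : ℝ) (h1 : (k:ℝ) < x) (h2 : x < k + 1) :
    |Real.sin (π * x)| * (k:ℝ)^3 < x^3 - x := by
  have hk2 : (2:ℝ) ≤ k := by exact_mod_cast hk
  have hπ := Real.pi_pos
  have hπ3 : (3:ℝ) < π := Real.pi_gt_three
  have hπ315 : π < 3.15 := Real.pi_lt_d2
  have hsin : |Real.sin (π * x)| = Real.sin (π * (x - k)) := by
    rw [abs_sin_pi_shift k x, abs_of_pos]
    exact Real.sin_pos_of_pos_of_lt_pi (by nlinarith) (by nlinarith)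
  rw [hsin]
  rcases le_or_gt (x - k) (3/10) with hcase | hcase
  · have hlt : Real.sin (π * (x - k)) < π * (x - k) := Real.sin_lt (by nlinarith)
    have hkpos : (0:ℝ) < (k:ℝ)^3 := by positivity
    have coeff_nn : 0 ≤ π * (k:ℝ)^3 - 3*(k:ℝ)^2 + 1 := by nlinarith
    have c1 : (π*(k:ℝ)^3 - 3*(k:ℝ)^2 + 1) * (x - k)
        ≤ (π*(k:ℝ)^3 - 3*(k:ℝ)^2 + 1) * (3/10) :=
      mul_le_mul_of_nonneg_left hcase coeff_nn
    have c2 : (π*(k:ℝ)^3 - 3*(k:ℝ)^2 + 1) * (3/10) ≤ (k:ℝ)^3 - k := by nlinarith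
    have hstep : Real.sin (π * (x - k)) * (k:ℝ)^3 < (π * (x - k)) * (k:ℝ)^3 :=
      mul_lt_mul_of_pos_right hlt hkpos
    have ht2 : 0 ≤ 3*(k:ℝ)*(x - k)^2 := by positivity
    have ht3 : 0 ≤ (x - (k:ℝ))^3 := pow_nonneg (by linarith) 3
    nlinarith [c1, c2, hstep, ht2, ht3]
  · have hs1 : Real.sin (π * (x - k)) ≤ 1 := Real.sin_le_one _
    have hk3pos : (0:ℝ) < (k:ℝ)^3 := by positivity
    have hkt : 3*(k:ℝ)^2 * (3/10) ≤ 3*(k:ℝ)^2 * (x - k) :=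
      mul_le_mul_of_nonneg_left hcase.le (by positivity)
    have ht2 : 0 ≤ 3*(k:ℝ)*(x - k)^2 := by positivity
    have ht3 : 0 ≤ (x - (k:ℝ))^3 := pow_nonneg (by linarith) 3
    have hkk : (k:ℝ)^3 < x^3 - x := by nlinarith [sq_nonneg ((k:ℝ) - 2)]
    nlinarith [mul_le_mul_of_nonneg_right hs1 hk3pos.le]

set_option maxHeartbeats 1000000 in
/-- Side lobe peak location and height bound: for `k ≥ 2`, the maximizer `ν_k^w` of
`|w̃|` on `(k/T, (k+1)/T)` satisfies `ν_k^w < (k + 1/2)/T` and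
`|w̃(ν_k^w)| < T/(2π k³)`. -/
theorem hann_sidelobe_peak (T : ℝ) (hT : 0 < T) (k : ℕ) (hk : 2 ≤ k) (νkw : ℝ)
    (hmem : νkw ∈ Set.Ioo ((k : ℝ) / T) (((k : ℝ) + 1) / T))
    (hmax : IsMaxOn (fun ν => ‖hannFTFormula T ν‖)
      (Set.Ioo ((k : ℝ) / T) (((k : ℝ) + 1) / T)) νkw) :
    νkw < ((k : ℝ) + 1 / 2) / T ∧
    ‖hannFTFormula T νkw‖ < T / (2 * Real.pi * (k : ℝ) ^ 3) := by
  have hπ := Real.pi_pos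
  have hk2 : (2:ℝ) ≤ k := by exact_mod_cast hk
  set x : ℝ := T * νkw with hxdef
  have hx1 : (k:ℝ) < x := by
    have h := hmem.1
    rw [div_lt_iff₀ hT] at h
    rw [hxdef, mul_comm]; exact h
  have hx2 : x < (k:ℝ) + 1 := by
    have h := hmem.2
    rw [lt_div_iff₀ hT] at h
    rw [hxdef, mul_comm]; exact h
  have hx0 : (2:ℝ) < x := by linarith
  have hx1' : (1:ℝ) < T * νkw := by rw [← hxdef]; linarith
  have hxx : 0 < x^3 - x := cube_pos (by linarith)
  have hsx_pos : 0 < |Real.sin (π * x)| := by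
    rw [abs_sin_pi_shift k x]
    rw [abs_of_pos (Real.sin_pos_of_pos_of_lt_pi (by nlinarith) (by nlinarith))]
    exact Real.sin_pos_of_pos_of_lt_pi (by nlinarith) (by nlinarith)
  have part1 : νkw < ((k : ℝ) + 1 / 2) / T := by
    by_contra hcon
    push_neg at hcon
    rw [div_le_iff₀ hT] at hcon
    have hge : (k:ℝ) + 1/2 ≤ x := by rw [hxdef, mul_comm]; exact hcon
    -- competitor machinery
    have compete : ∀ y : ℝ, (k:ℝ) < y → y < (k:ℝ) + 1 →
        T * |Real.sin (π * y)| * (2 * π * (x^3 - x))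
          ≤ T * |Real.sin (π * x)| * (2 * π * (y^3 - y)) := by
      intro y hy1 hy2
      have hy0 : (2:ℝ) < y := by linarith
      have hyy : 0 < y^3 - y := cube_pos (by linarith)
      have hTy : T * (y / T) = y := by field_simp
      have hνy : y / T ∈ Set.Ioo ((k : ℝ) / T) (((k : ℝ) + 1) / T) := by
        rw [Set.mem_Ioo]
        constructor <;> rw [div_lt_div_iff₀ hT hT] <;> nlinarith
      have hle0 : ‖hannFTFormula T (y/T)‖
          ≤ ‖hannFTFormula T νkw‖ := hmax hνy
      rw [abs_hann T (y/T) hT (by rw [hTy]; linarith), hTy,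
        abs_hann T νkw hT hx1', ← hxdef] at hle0
      rw [div_le_div_iff₀ (by positivity) (by positivity)] at hle0
      exact hle0
    rcases eq_or_lt_of_le hge with heq | hlt
    · -- x = k + 1/2 : perturb
      set ε : ℝ := 1 / (10 * (k:ℝ)) with hεdef
      have hkne : (k:ℝ) ≠ 0 := by positivity
      have hε0 : 0 < ε := by rw [hεdef]; positivity
      have hεle : ε ≤ 1/20 := by
        rw [hεdef, div_le_div_iff₀ (by positivity) (by norm_num)]
        linarith
      set y : ℝ := x - ε with hydef
      have hy1 : (k:ℝ) < y := by rw [hydef]; linarith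
      have hy2 : y < (k:ℝ) + 1 := by rw [hydef]; linarith
      have hy0 : (2:ℝ) < y := by linarith
      have hyy : 0 < y^3 - y := cube_pos (by linarith)
      have hsy : |Real.sin (π * y)| = Real.cos (π * ε) := by
        rw [abs_sin_pi_shift k y,
          show π * (y - k) = π/2 - π * ε by rw [hydef, ← heq]; ring,
          Real.sin_pi_div_two_sub]
        exact abs_of_pos (Real.cos_pos_of_mem_Ioo ⟨by nlinarith, by nlinarith⟩)
      have hsx : |Real.sin (π * x)| = 1 := by
        rw [abs_sin_pi_shift k x, show π * (x - k) = π/2 by rw [← heq]; ring,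
          Real.sin_pi_div_two, abs_one]
      have hle := compete y hy1 hy2
      rw [hsy, hsx] at hle
      -- polynomial bound
      have hπ2 : π^2 < 9.9225 := by nlinarith [Real.pi_lt_d2, Real.pi_pos]
      have hpoly : π^2 * (x^3 - x) < 20*(k:ℝ)*(3*(k:ℝ)^2 - 1) := by
        have ha : π^2 * (x^3 - x) ≤ 9.9225 * (x^3 - x) :=
          mul_le_mul_of_nonneg_right hπ2.le hxx.le
        have hb : 9.9225 * (x^3 - x) < 20*(k:ℝ)*(3*(k:ℝ)^2 - 1) := by
          rw [← heq]
          nlinarith [hk2, sq_nonneg ((k:ℝ) - 2),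
            mul_nonneg (sub_nonneg.2 hk2) (sq_nonneg ((k:ℝ) - 2)),
            mul_nonneg (sub_nonneg.2 hk2) (mul_nonneg (sub_nonneg.2 hk2) (sub_nonneg.2 hk2))]
        linarith
      have h2 : π^2 * ε^2 / 2 * (x^3 - x) < (3*(k:ℝ)^2 - 1) * ε := by
        have hm := mul_lt_mul_of_pos_right hpoly (show 0 < ε^2/2 by positivity)
        have he : 20*(k:ℝ)*(3*(k:ℝ)^2 - 1) * (ε^2/2) = (3*(k:ℝ)^2 - 1) * ε := by
          rw [hεdef]; field_simp; ring
        calc π^2 * ε^2 / 2 * (x^3 - x) = π^2 * (x^3-x) * (ε^2/2) := by ring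
          _ < 20*(k:ℝ)*(3*(k:ℝ)^2 - 1) * (ε^2/2) := hm
          _ = (3*(k:ℝ)^2 - 1) * ε := he
      have h1 : (3*(k:ℝ)^2 - 1) * ε ≤ (x^3 - x) - (y^3 - y) := by
        have hk0 : (0:ℝ) ≤ k := by linarith
        have hxk2 : (k:ℝ)*(k:ℝ) < x * x := mul_lt_mul'' hx1 hx1 hk0 hk0
        have hyk2 : (k:ℝ)*(k:ℝ) < y * y := mul_lt_mul'' hy1 hy1 hk0 hk0
        have hxyk : (k:ℝ)*(k:ℝ) < x * y := mul_lt_mul'' hx1 hy1 hk0 hk0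
        have hident : (x^3 - x) - (y^3 - y) = (x - y) * (x^2 + x*y + y^2 - 1) := by ring
        have hxy : x - y = ε := by rw [hydef]; ring
        nlinarith [hε0, hxk2, hyk2, hxyk, hident, hxy]
      have hcos : 1 - (π*ε)^2/2 ≤ Real.cos (π*ε) := by
        have := Real.one_sub_sq_div_two_le_cos (x := π*ε)
        linarith
      have hchain : (y^3 - y) < Real.cos (π*ε) * (x^3 - x) := by
        nlinarith [mul_nonneg (sub_nonneg.2 hcos) hxx.le, h1, h2]
      have hfac : 0 < 2 * π * T := by positivity
      nlinarith [hle, mul_lt_mul_of_pos_left hchain hfac]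
    · -- x > k + 1/2 : reflect
      set y : ℝ := 2*(k:ℝ) + 1 - x with hydef
      have hy1 : (k:ℝ) < y := by rw [hydef]; linarith
      have hy2 : y < (k:ℝ) + 1 := by rw [hydef]; linarith
      have hy0 : (2:ℝ) < y := by linarith
      have hyx : y < x := by rw [hydef]; linarith
      have hsy : |Real.sin (π * y)| = |Real.sin (π * x)| := by
        rw [abs_sin_pi_shift k y, abs_sin_pi_shift k x,
          show π * (y - k) = π - π * (x - k) by rw [hydef]; ring,
          Real.sin_pi_sub]
      have hle := compete y hy1 hy2
      rw [hsy] at hle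
      have hmono : y^3 - y < x^3 - x := by
        have hxy : 0 < x - y := by rw [hydef]; linarith
        have h4 : (2:ℝ)*2 < x*y := mul_lt_mul'' hx0 hy0 (by norm_num) (by norm_num)
        have hq : 0 < x^2 + x*y + y^2 - 1 := by nlinarith [sq_nonneg x, sq_nonneg y]
        nlinarith [mul_pos hxy hq]
      have hfac : 0 < T * |Real.sin (π * x)| * (2*π) := by positivity
      nlinarith [hle, mul_lt_mul_of_pos_left hmono hfac]
  refine ⟨part1, ?_⟩
  rw [abs_hann T νkw hT hx1', ← hxdef]
  rw [div_lt_div_iff₀ (by positivity) (by positivity)]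
  have hcore := core k hk x hx1 hx2
  nlinarith [hcore, mul_pos hT hπ, abs_nonneg (Real.sin (π * x))]
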